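/- Let x^h solve the semidiscrete scheme ẍ^h_j + β ẋ^h_j = (2/(q^h_j+q^h_{j+1}))(τ^h_{j+1}−τ^h_j)/h − (ẋ^h_j·θ̇^h_j)θ^h_j with ẋ^h_j·θ^h_j = 0. Then the discrete length elements satisfy q̇^h_j + (1/4)(q^h_{j-1}+q^h_j)(ẋ^h_{j-1}·ẍ^h_{j-1} + β|ẋ^h_{j-1}|²) + (1/4)(q^h_j+q^h_{j+1})(ẋ^h_j·ẍ^h_j + β|ẋ^h_j|²) = 0 for all j and t. -/

import Mathlib

open scoped RealInnerProductSpace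
open Set

noncomputable section

abbrev E2 := EuclideanSpace ℝ (Fin 2)

/-- Clockwise rotation through π/2. -/
def rot (v : E2) : E2 := (WithLp.equiv 2 (Fin 2 → ℝ)).symm ![v 1, -v 0]

/-- for the semidiscrete scheme with the orthogonality property
`ẋ^h_j·θ^h_j = 0`, the discrete length elements satisfy
`q̇^h_j + (1/4)(q^h_{j-1}+q^h_j)(ẋ^h_{j-1}·ẍ^h_{j-1} + β|ẋ^h_{j-1}|²)
       + (1/4)(q^h_j+q^h_{j+1})(ẋ^h_j·ẍ^h_j + β|ẋ^h_j|²) = 0`. -/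
theorem semidiscrete_length_element_evolution
    (J : ℕ) (hJ : 2 ≤ J) (Th β : ℝ) (hTh : 0 < Th) (hβ : 0 ≤ β)
    (xh xhd xhdd τ θ θd : ℤ → ℝ → E2) (q qd : ℤ → ℝ → ℝ)
    (hper : ∀ j t, xh (j + J) t = xh j t)
    (hq : ∀ j t, q j t = ‖(J:ℝ) • (xh j t - xh (j-1) t)‖)
    (hqpos : ∀ j, ∀ t ∈ Ico (0:ℝ) Th, 0 < q j t)
    (hτ : ∀ j t, τ j t = (q j t)⁻¹ • ((J:ℝ) • (xh j t - xh (j-1) t)))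
    (hθwell : ∀ j, ∀ t ∈ Ico (0:ℝ) Th, τ j t + τ (j+1) t ≠ 0)
    (hθ : ∀ j t, θ j t = ‖τ j t + τ (j+1) t‖⁻¹ • (τ j t + τ (j+1) t))
    (hxhd : ∀ j t, HasDerivAt (fun t' => xh j t') (xhd j t) t)
    (hxhdd : ∀ j t, HasDerivAt (fun t' => xhd j t') (xhdd j t) t)
    (hθd : ∀ j, ∀ t ∈ Ico (0:ℝ) Th, HasDerivAt (fun t' => θ j t') (θd j t) t)
    (hqd : ∀ j, ∀ t ∈ Ico (0:ℝ) Th, HasDerivAt (fun t' => q j t') (qd j t) t)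
    (hscheme : ∀ j, ∀ t ∈ Ico (0:ℝ) Th,
      xhdd j t + β • xhd j t
        = (2 / (q j t + q (j+1) t)) • ((J:ℝ) • (τ (j+1) t - τ j t))
          - ⟪xhd j t, θd j t⟫ • θ j t)
    (horth : ∀ j, ∀ t ∈ Ico (0:ℝ) Th, ⟪xhd j t, θ j t⟫ = 0) :
    ∀ j, ∀ t ∈ Ico (0:ℝ) Th,
      qd j t
        + (1/4) * (q (j-1) t + q j t) *
            (⟪xhd (j-1) t, xhdd (j-1) t⟫ + β * ‖xhd (j-1) t‖ ^ 2)
        + (1/4) * (q j t + q (j+1) t) *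
            (⟪xhd j t, xhdd j t⟫ + β * ‖xhd j t‖ ^ 2)
        = 0 := by
  intro j t ht
  -- orthogonality rewritten in terms of τ
  have horthτ : ∀ k : ℤ, ⟪xhd k t, τ k t⟫ + ⟪xhd k t, τ (k+1) t⟫ = 0 := by
    intro k
    have h0 := horth k t ht
    rw [hθ, real_inner_smul_right] at h0
    have hne : ‖τ k t + τ (k+1) t‖ ≠ 0 := norm_ne_zero_iff.mpr (hθwell k t ht)
    have h1 := (mul_eq_zero.mp h0).resolve_left (inv_ne_zero hne)
    rwa [inner_add_right] at h1
  -- consequence of the scheme tested against ẋ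
  have hT : ∀ k : ℤ, (1/4) * (q k t + q (k+1) t) *
      (⟪xhd k t, xhdd k t⟫ + β * ‖xhd k t‖ ^ 2)
      = ((J:ℝ)/2) * (⟪xhd k t, τ (k+1) t⟫ - ⟪xhd k t, τ k t⟫) := by
    intro k
    have hk := hqpos k t ht
    have hk1 := hqpos (k+1) t ht
    have hs : q k t + q (k+1) t ≠ 0 := by linarith
    have h1 := congrArg (fun v => ⟪xhd k t, v⟫) (hscheme k t ht)
    simp only [inner_add_right, inner_sub_right, real_inner_smul_right,
      real_inner_self_eq_norm_sq, horth k t ht, mul_zero, sub_zero] at h1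
    rw [h1]
    field_simp
    ring
  -- formula for q̇ⱼ
  have hqdE : qd j t
      = (J:ℝ) * (⟪xhd j t, τ j t⟫ - ⟪xhd (j-1) t, τ j t⟫) := by
    have hjq := hqpos j t ht
    set v : ℝ → E2 := fun t' => (J:ℝ) • (xh j t' - xh (j-1) t') with hv
    have hvd : HasDerivAt v ((J:ℝ) • (xhd j t - xhd (j-1) t)) t :=
      ((hxhd j t).sub (hxhd (j-1) t)).const_smul (J:ℝ)
    have hA := hvd.inner ℝ hvd
    have hB : HasDerivAt (fun t' => q j t' ^ 2) (2 * q j t ^ 1 * qd j t) t :=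
      (hqd j t ht).pow 2
    have hfun : (fun t' => q j t' ^ 2) = fun t' => ⟪v t', v t'⟫ := by
      funext s
      rw [hq, ← real_inner_self_eq_norm_sq]
    rw [hfun] at hB
    have huniq := hB.unique hA
    have hcomm := real_inner_comm (v t) ((J:ℝ) • (xhd j t - xhd (j-1) t))
    have key : q j t * qd j t
        = ⟪(J:ℝ) • (xhd j t - xhd (j-1) t), v t⟫ := by
      rw [hcomm] at huniq
      nlinarith [huniq]
    have hvt : v t = (J:ℝ) • (xh j t - xh (j-1) t) := rfl
    rw [hvt] at key
    simp only [real_inner_smul_left, real_inner_smul_right, inner_sub_left] at key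
    rw [hτ]
    simp only [real_inner_smul_right]
    have hq0 : q j t ≠ 0 := ne_of_gt hjq
    rw [← inv_mul_cancel_left₀ hq0 (qd j t), key]
    ring
  have ha := horthτ (j-1)
  have hb := horthτ j
  have h1 := hT (j-1)
  have h2 := hT j
  rw [show j - 1 + 1 = j by ring] at ha h1
  linear_combination hqdE + h1 + h2 + ((J:ℝ)/2) * hb - ((J:ℝ)/2) * ha
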